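/- Let λ_n = n(n−1)(n−2) + 1 for n ∈ ℕ (the eigenvalues of Ĝ = A*³A³ + I) and set r_k = (λ_k + λ_{k+1})/2. Then for every real β ≥ 3, every integer k ≥ 2, every z ∈ ℂ with |z| = r_k, and every n ∈ ℕ, one has |λ_n − z| ≥ (1/2)·r_k^{2/β}. Equivalently, on the circles |z| = r_k the resolvent of Ĝ satisfies ‖(Ĝ − zI)^{−1}‖ ≤ 2/|z|^{2/β}. -/
import Mathlib


/-- The eigenvalues `λₙ = n(n−1)(n−2) + 1` of `Ĝ = A*³A³ + I`. -/
def lamGhat (n : ℕ) : ℕ := n * (n - 1) * (n - 2) + 1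

/-- The radius `r_k = (λ_k + λ_{k+1})/2`. -/
noncomputable def rCirc (k : ℕ) : ℝ := ((lamGhat k : ℝ) + (lamGhat (k + 1) : ℝ)) / 2

lemma lamGhat_mono : Monotone lamGhat := by
  intro a b h
  unfold lamGhat
  exact Nat.add_le_add (Nat.mul_le_mul (Nat.mul_le_mul h (Nat.sub_le_sub_right h 1))
    (Nat.sub_le_sub_right h 2)) le_rfl

lemma lamGhat_cast (k : ℕ) (hk : 2 ≤ k) :
    (lamGhat k : ℝ) = (k : ℝ) * ((k : ℝ) - 1) * ((k : ℝ) - 2) + 1 := by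
  unfold lamGhat
  have h1 : ((k - 1 : ℕ) : ℝ) = (k : ℝ) - 1 := by
    rw [Nat.cast_sub (by omega)]; norm_num
  have h2 : ((k - 2 : ℕ) : ℝ) = (k : ℝ) - 2 := by
    rw [Nat.cast_sub (by omega)]; norm_num
  push_cast [h1, h2]
  ring

set_option maxHeartbeats 1000000 in
/-- On the circles `|z| = r_k` (`k ≥ 2`), for every `β ≥ 3` the distance from `z`
to each eigenvalue `λₙ` of `Ĝ` is at least `(1/2)·r_k^{2/β}`; equivalently the
resolvent of `Ĝ` satisfies `‖(Ĝ − z)⁻¹‖ ≤ 2/|z|^{2/β}` there. -/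
theorem gHat_resolvent_circle_estimate (β : ℝ) (hβ : 3 ≤ β)
    (k : ℕ) (hk : 2 ≤ k) (z : ℂ) (hz : ‖z‖ = rCirc k) (n : ℕ) :
    ‖((lamGhat n : ℕ) : ℂ) - z‖ ≥ (1 / 2) * (rCirc k) ^ ((2 : ℝ) / β) := by

  set a : ℝ := (k : ℝ) with ha
  have ha2 : (2:ℝ) ≤ a := by rw [ha]; exact_mod_cast hk
  have hck : (lamGhat k : ℝ) = a * (a - 1) * (a - 2) + 1 := lamGhat_cast k hk
  have hck1 : (lamGhat (k+1) : ℝ) = (a+1) * a * (a - 1) + 1 := by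
    rw [lamGhat_cast (k+1) (by omega)]; push_cast; ring
  have hr : rCirc k = (a * (a - 1) * (a - 2) + (a+1) * a * (a - 1) + 2) / 2 := by
    rw [rCirc, hck, hck1]; ring
  set r : ℝ := rCirc k with hrr
  have hr1 : (1:ℝ) ≤ r := by rw [hr]; nlinarith
  -- Step 1: norm lower bound by |λ_n - r|
  have hnormlam : ‖((lamGhat n : ℕ) : ℂ)‖ = (lamGhat n : ℝ) := by
    rw [Complex.norm_natCast]
  have step1 : |(lamGhat n : ℝ) - r| ≤ ‖((lamGhat n : ℕ) : ℂ) - z‖ := by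
    calc |(lamGhat n : ℝ) - r| = |‖((lamGhat n : ℕ) : ℂ)‖ - ‖z‖| := by rw [hnormlam, hz]
    _ ≤ ‖((lamGhat n : ℕ) : ℂ) - z‖ := abs_norm_sub_norm_le _ _
  -- Step 2: |λ_n - r| ≥ 3a(a-1)/2
  have step2 : 3 * a * (a - 1) / 2 ≤ |(lamGhat n : ℝ) - r| := by
    rcases le_or_gt n k with hn | hn
    · have hle : (lamGhat n : ℝ) ≤ (lamGhat k : ℝ) := by
        exact_mod_cast lamGhat_mono hn
      rw [abs_sub_comm, abs_of_nonneg (by rw [hr]; nlinarith)]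
      rw [hr]; nlinarith
    · have hle : (lamGhat (k+1) : ℝ) ≤ (lamGhat n : ℝ) := by
        exact_mod_cast lamGhat_mono (by omega : k + 1 ≤ n)
      rw [abs_of_nonneg (by rw [hr]; nlinarith)]
      rw [hr]; nlinarith
  -- Step 3: r^(2/β) ≤ r^(2/3) ≤ 3a(a-1)
  have hexp : (2:ℝ)/β ≤ 2/3 := by
    apply div_le_div_of_nonneg_left (by norm_num) (by norm_num) hβ
  have step3a : r ^ ((2:ℝ)/β) ≤ r ^ ((2:ℝ)/3) :=
    Real.rpow_le_rpow_of_exponent_le hr1 hexp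
  have step3b : r ^ ((2:ℝ)/3) ≤ 3 * a * (a - 1) := by
    have hx0 : (0:ℝ) ≤ r ^ ((2:ℝ)/3) := Real.rpow_nonneg (by linarith) _
    have hy0 : (0:ℝ) ≤ 3 * a * (a - 1) := by nlinarith
    rw [← pow_le_pow_iff_left₀ hx0 hy0 (three_ne_zero)]
    have hcube : (r ^ ((2:ℝ)/3)) ^ (3:ℕ) = r ^ (2:ℕ) := by
      rw [← Real.rpow_natCast (r ^ ((2:ℝ)/3)) 3, ← Real.rpow_mul (by linarith)]
      norm_num
    rw [hcube]
    have hr0 : (0:ℝ) ≤ r := by linarith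
    have hra : r ≤ a^3 + 1 := by rw [hr]; nlinarith
    have hc : a^3 ≤ (a-1)^3 * 8 := by
      nlinarith [mul_nonneg (by linarith : (0:ℝ) ≤ a - 2) (sq_nonneg (a-1)),
        mul_nonneg (by linarith : (0:ℝ) ≤ a - 2) (by linarith : (0:ℝ) ≤ 4*a - 3)]
    have ht : (8:ℝ) ≤ a^3 := by nlinarith [ha2, sq_nonneg a]
    have h1 : r^(2:ℕ) ≤ (a^3+1)^2 := by
      have := pow_le_pow_left₀ hr0 hra 2
      simpa using this
    have h2 : (a^3+1)^2 ≤ 27/8 * a^3 * a^3 := by nlinarith [ht]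
    have h3 : 27/8 * a^3 * a^3 ≤ 27 * a^3 * (a-1)^3 := by
      nlinarith [mul_nonneg (by positivity : (0:ℝ) ≤ a^3)
        (by linarith : (0:ℝ) ≤ (a-1)^3 * 8 - a^3)]
    calc r^(2:ℕ) ≤ (a^3+1)^2 := h1
    _ ≤ 27/8 * a^3 * a^3 := h2
    _ ≤ 27 * a^3 * (a-1)^3 := h3
    _ = (3 * a * (a-1))^3 := by ring
  calc (1/2) * r ^ ((2:ℝ)/β) ≤ (1/2) * (3 * a * (a-1)) := by
        have := step3a.trans step3b; linarith
  _ = 3 * a * (a - 1) / 2 := by ring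
  _ ≤ |(lamGhat n : ℝ) - r| := step2
  _ ≤ ‖((lamGhat n : ℕ) : ℂ) - z‖ := step1
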